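/- Let G be a finite simple graph that is a domain, and let H_h, H_i, H_j be three pairwise distinct connected components of G^{0-1}, with vertex bipartitions A_h ∪ B_h, A_i ∪ B_i, A_j ∪ B_j respectively. If G contains an edge between a vertex of A_h and a vertex of A_i, and an edge between a vertex of A_h and a vertex of A_j, then G contains no edge between a vertex of B_i and a vertex of B_j. -/

import Mathlib

variable {V : Type*} [Fintype V] [DecidableEq V]

/-- For `k ∈ ℕ`, a `k`-cover of `G` is a function from the vertices of `G` to `ℕ` that is
not identically zero and whose values at the two endpoints of any edge sum to at least `k`. -/
def IsCover (G : SimpleGraph V) (k : ℕ) (a : V → ℕ) : Prop :=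
  a ≠ 0 ∧ ∀ i j : V, G.Adj i j → k ≤ a i + a j

/-- A `k`-cover is basic if it is not the pointwise sum of a `k`-cover and a `0`-cover. -/
def IsBasicCover (G : SimpleGraph V) (k : ℕ) (a : V → ℕ) : Prop :=
  IsCover G k a ∧ ¬ ∃ b c : V → ℕ, IsCover G k b ∧ IsCover G 0 c ∧ a = b + c

/-- `G` is a domain if for all `s, t` with `s + t ≥ 1`, the pointwise sum of any `s` basic
`1`-covers and any `t` basic `2`-covers of `G` is a basic `(s + 2t)`-cover. -/
def IsGraphDomain (G : SimpleGraph V) : Prop :=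
  ∀ s t : ℕ, 1 ≤ s + t → ∀ f : Fin s → V → ℕ, ∀ g : Fin t → V → ℕ,
    (∀ p, IsBasicCover G 1 (f p)) → (∀ q, IsBasicCover G 2 (g q)) →
    IsBasicCover G (s + 2 * t) ((∑ p, f p) + (∑ q, g q))

/-- `G` is unmixed if all basic `1`-covers of `G` have the same norm. -/
def IsUnmixed (G : SimpleGraph V) : Prop :=
  ∀ a b : V → ℕ, IsBasicCover G 1 a → IsBasicCover G 1 b → ∑ v, a v = ∑ v, b v

/-- `G` satisfies WSC if it has at least one edge and every non-isolated vertex `i` has a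
neighbour `j` such that any neighbour of `i` is adjacent to any neighbour of `j`. -/
def SatisfiesWSC (G : SimpleGraph V) : Prop :=
  (∃ i j : V, G.Adj i j) ∧
    ∀ i : V, (∃ x, G.Adj i x) →
      ∃ j : V, G.Adj i j ∧ ∀ i' j' : V, G.Adj i i' → G.Adj j j' → G.Adj i' j'

/-- `G` satisfies SC if for every edge `{i, j}`, every neighbour `i'` of `i` and every
neighbour `j'` of `j`, one has `i' ≠ j'` and `{i', j'}` is an edge. -/
def SatisfiesSC (G : SimpleGraph V) : Prop :=
  ∀ i j i' j' : V, G.Adj i j → G.Adj i i' → G.Adj j j' → i' ≠ j' ∧ G.Adj i' j'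

/-- `G` satisfies MSC if the set of non-isolated vertices of `G` is nonempty and carries a
perfect matching `M` (a matching of `G` whose vertex set is exactly the set of non-isolated
vertices) such that for every edge `{i, j}` of `M`, every neighbour `i'` of `i` in `G` and
every neighbour `j'` of `j` in `G`, `{i', j'}` is an edge of `G`. -/
def SatisfiesMSC (G : SimpleGraph V) : Prop :=
  ∃ M : G.Subgraph, M.verts = {v : V | ∃ w, G.Adj v w} ∧ M.verts.Nonempty ∧
    M.IsMatching ∧
    ∀ i j : V, M.Adj i j → ∀ i' j' : V, G.Adj i i' → G.Adj j j' → G.Adj i' j'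

/-- The graph `G^{0-1}`: its edges are the edges `{i, j}` of `G` such that `a i + a j = 1`
for every basic `1`-cover `a` of `G`.  (Its vertex set is interpreted as the set of
non-isolated vertices of `G`; here it is defined on all of `V`, and the vertices of `G`
that are isolated stay isolated, so they can be excluded explicitly when needed.) -/
def ZeroOne (G : SimpleGraph V) : SimpleGraph V where
  Adj i j := G.Adj i j ∧ ∀ a : V → ℕ, IsBasicCover G 1 a → a i + a j = 1
  symm := by
    constructor
    intro i j h
    exact ⟨h.1.symm, fun a ha => by rw [add_comm]; exact h.2 a ha⟩
  loopless := by
    constructor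
    intro i h
    exact G.loopless.irrefl i h.1

/-- `A ∪ B` is a vertex bipartition of the connected component `C` of `H`, and the edges of
`H` inside `C` are exactly the pairs `{x, y}` with `x ∈ A` and `y ∈ B` (so the component is
a complete bipartite graph on `A ∪ B`). -/
def IsCompBipartition (H : SimpleGraph V) (C : H.ConnectedComponent) (A B : Set V) : Prop :=
  A ∪ B = C.supp ∧ Disjoint A B ∧
    ∀ x ∈ C.supp, ∀ y ∈ C.supp,
      (H.Adj x y ↔ (x ∈ A ∧ y ∈ B) ∨ (x ∈ B ∧ y ∈ A))

/-- The graph `G⁺` obtained from `G` by attaching a pendant vertex to each vertex of `G`: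
`Sum.inl v` is the original vertex `v`, and `Sum.inr v` is the pendant attached to `v`. -/
def GPlus (G : SimpleGraph V) : SimpleGraph (V ⊕ V) where
  Adj x y :=
    match x, y with
    | Sum.inl u, Sum.inl v => G.Adj u v
    | Sum.inl u, Sum.inr v => u = v
    | Sum.inr u, Sum.inl v => u = v
    | Sum.inr _, Sum.inr _ => False
  symm := by
    constructor
    rintro (u | u) (v | v) h
    · exact h.symm
    · exact h.symm
    · exact h.symm
    · exact h.elim
  loopless := by
    constructor
    rintro (u | u) h
    · exact G.loopless.irrefl u h
    · exact h
/-- Every `1`-cover dominates a basic `1`-cover. -/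
theorem exists_basic_le (G : SimpleGraph V) :
    ∀ (n : ℕ) (c : V → ℕ), IsCover G 1 c → (∑ v, c v) = n →
      ∃ a, a ≤ c ∧ IsBasicCover G 1 a := by
  intro n
  induction n using Nat.strong_induction_on with
  | _ n ih =>
    intro c hc hn
    by_cases hb : IsBasicCover G 1 c
    · exact ⟨c, le_refl c, hb⟩
    · have hdec : ∃ b d : V → ℕ, IsCover G 1 b ∧ IsCover G 0 d ∧ c = b + d := by
        unfold IsBasicCover at hb
        push_neg at hb
        exact hb hc
      obtain ⟨b, d, hbcov, hdcov, hcbd⟩ := hdec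
      have hble : b ≤ c := by
        intro v; rw [hcbd]; exact Nat.le_add_right _ _
      have hdne : ∃ v, 0 < d v := by
        by_contra h
        push_neg at h
        exact hdcov.1 (funext fun v => Nat.le_zero.mp (h v))
      obtain ⟨v0, hv0⟩ := hdne
      have hlt : (∑ v, b v) < n := by
        rw [← hn, hcbd]
        have hsum : ∑ v, (b + d) v = ∑ v, b v + ∑ v, d v := by
          simp [Finset.sum_add_distrib]
        rw [hsum]
        have hpos : 0 < ∑ v, d v :=
          Finset.sum_pos' (fun i _ => Nat.zero_le _) ⟨v0, Finset.mem_univ _, hv0⟩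
        omega
      obtain ⟨a, hab, hbasic⟩ := ih _ hlt b hbcov rfl
      exact ⟨a, le_trans hab hble, hbasic⟩

/-- Let `G` be a domain and let `Hₕ, Hᵢ, Hⱼ` be three pairwise distinct
connected components of `G^{0-1}` with bipartitions `Ah ∪ Bh`, `Ai ∪ Bi`, `Aj ∪ Bj`.
If `G` has an edge between `Ah` and `Ai` and an edge between `Ah` and `Aj`, then `G` has
no edge between `Bi` and `Bj`. -/
theorem no_edge_between_Bi_and_Bj (G : SimpleGraph V) (hG : IsGraphDomain G)
    (Ch Ci Cj : (ZeroOne G).ConnectedComponent)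
    (hhi : Ch ≠ Ci) (hhj : Ch ≠ Cj) (hij : Ci ≠ Cj)
    (hsupph : Ch.supp ⊆ {v : V | ∃ w, G.Adj v w}) (hsuppi : Ci.supp ⊆ {v : V | ∃ w, G.Adj v w})
    (hsuppj : Cj.supp ⊆ {v : V | ∃ w, G.Adj v w})
    (Ah Bh Ai Bi Aj Bj : Set V)
    (hbh : IsCompBipartition (ZeroOne G) Ch Ah Bh)
    (hbi : IsCompBipartition (ZeroOne G) Ci Ai Bi)
    (hbj : IsCompBipartition (ZeroOne G) Cj Aj Bj)
    (hedge₁ : ∃ x ∈ Ah, ∃ y ∈ Ai, G.Adj x y)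
    (hedge₂ : ∃ x ∈ Ah, ∃ y ∈ Aj, G.Adj x y) :
    ¬ ∃ x ∈ Bi, ∃ y ∈ Bj, G.Adj x y := by
  rintro ⟨zi, hzi, zj, hzj, hzadj⟩
  obtain ⟨xh, hxh, yi, hyi, hxyi⟩ := hedge₁
  obtain ⟨xh', hxh', yj, hyj, hxyj⟩ := hedge₂
  set c₀ : V → ℕ := fun v => if v = xh then 0 else 1 with hc₀def
  have hyine : yi ≠ xh := fun h => G.loopless.irrefl xh (h ▸ hxyi)
  have hc₀ : IsCover G 1 c₀ := by
    constructor
    · intro h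
      have := congrFun h yi
      simp [hc₀def, hyine] at this
    · intro i j hij'
      rcases eq_or_ne j xh with hj | hj
      · have hi : i ≠ xh := fun h => hij'.ne (h.trans hj.symm)
        have : c₀ i = 1 := if_neg hi
        omega
      · have : c₀ j = 1 := if_neg hj
        omega
  obtain ⟨a, hale, haB⟩ := exists_basic_le G (∑ v, c₀ v) c₀ hc₀ rfl
  have haxh : a xh = 0 := by
    have h := hale xh
    simpa [hc₀def] using h
  have hacov := haB.1.2
  have tight : ∀ (C : (ZeroOne G).ConnectedComponent) (A B : Set V),
      IsCompBipartition (ZeroOne G) C A B → ∀ y ∈ A, ∀ z ∈ B, a y + a z = 1 := by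
    rintro C A B ⟨hun, hdisj, hiff⟩ y hy z hz
    have hys : y ∈ C.supp := hun ▸ Set.mem_union_left B hy
    have hzs : z ∈ C.supp := hun ▸ Set.mem_union_right A hz
    exact ((hiff y hys z hzs).mpr (Or.inl ⟨hy, hz⟩)).2 a haB
  have h1 : 1 ≤ a xh + a yi := hacov _ _ hxyi
  have t1 : a yi + a zi = 1 := tight Ci Ai Bi hbi yi hyi zi hzi
  have h2 : 1 ≤ a zi + a zj := hacov _ _ hzadj
  have t2 : a yj + a zj = 1 := tight Cj Aj Bj hbj yj hyj zj hzj
  have h3 : 1 ≤ a xh' + a yj := hacov _ _ hxyj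
  have haxh' : 1 ≤ a xh' := by omega
  rcases eq_or_ne xh xh' with he | hne
  · rw [← he] at haxh'; omega
  · have hxs : xh ∈ Ch.supp := hbh.1 ▸ Set.mem_union_left Bh hxh
    have hxs' : xh' ∈ Ch.supp := hbh.1 ▸ Set.mem_union_left Bh hxh'
    rw [SimpleGraph.ConnectedComponent.mem_supp_iff] at hxs hxs'
    have hreach : (ZeroOne G).Reachable xh xh' :=
      SimpleGraph.ConnectedComponent.exact (hxs.trans hxs'.symm)
    obtain ⟨w⟩ := hreach
    cases w with
    | nil => exact hne rfl
    | cons hadj₁ tail =>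
      rename_i p
      have hps : p ∈ Ch.supp := by
        rw [SimpleGraph.ConnectedComponent.mem_supp_iff, ← hxs]
        exact (SimpleGraph.ConnectedComponent.sound hadj₁.reachable).symm
      have hxsupp : xh ∈ Ch.supp := hbh.1 ▸ Set.mem_union_left Bh hxh
      have hpB : p ∈ Bh := by
        rcases (hbh.2.2 xh hxsupp p hps).mp hadj₁ with ⟨_, h⟩ | ⟨hxB, _⟩
        · exact h
        · exact absurd hxB (Set.disjoint_left.mp hbh.2.1 hxh)
      have tp : a xh + a p = 1 := hadj₁.2 a haB
      have tp' : a xh' + a p = 1 := tight Ch Ah Bh hbh xh' hxh' p hpB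
      omega
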